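/- Let F̃ be a complete spacelike C¹ hypersurface in M^{n+1}, p ∉ D(F̃) its domain of dependence, and v a future-directed null vector such that the line p + ℝv does not meet F̃. Then the entire null hyperplane P = p + v^⊥ does not meet F̃. -/

import Mathlib

open Filter


/-- The Minkowski bilinear form on `ℝ^{n+1}`. -/
noncomputable def mink {n : ℕ} (v w : Fin (n+1) → ℝ) : ℝ :=
  (∑ i, v i * w i) - 2 * v 0 * w 0

/-- A future-directed null vector. -/
def NullFuture {n : ℕ} (v : Fin (n+1) → ℝ) : Prop :=
  mink v v = 0 ∧ v ≠ 0 ∧ 0 < v 0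

/-- The horizontal part of a point of `M^{n+1}`, as a Euclidean vector. -/
def horizE {n : ℕ} (x : Fin (n+1) → ℝ) : EuclideanSpace ℝ (Fin n) :=
  WithLp.toLp 2 (fun i : Fin n => x i.succ)

section Auxiliary

open MeasureTheory Set intervalIntegral RealInnerProductSpace

private lemma key2d (Φ A B : ℝ → ℝ → ℝ) (d : ℝ) (hd : 0 < d)
    (hA : ∀ t s, HasDerivAt (fun t' => Φ t' s) (-(A t s)) t)
    (hB : ∀ t s, HasDerivAt (fun s' => Φ t s') (B t s) s)
    (hAc : Continuous fun q : ℝ × ℝ => A q.1 q.2)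
    (hBc : ∀ t, Continuous fun s => B t s)
    (hb : ∀ t s, (1 - A t s)^2 + (B t s)^2 < 1)
    (h00 : Φ 0 0 = 0)
    (hpos : ∀ t, 0 < Φ t d) : False := by
  have hA0 : ∀ t s, 0 < A t s := by
    intro t s; nlinarith [hb t s, sq_nonneg (B t s), sq_nonneg (1 - A t s)]
  have hA2 : ∀ t s, A t s < 2 := by
    intro t s; nlinarith [hb t s, sq_nonneg (B t s)]
  have hBle : ∀ t s, -1 < B t s ∧ B t s < 1 := by
    intro t s
    constructor <;> nlinarith [hb t s, sq_nonneg (1 - A t s)]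
  have hAMGM : ∀ t s c, 0 < c → c * B t s ≤ A t s + c^2/2 := by
    intro t s c hc
    have hbb : (B t s)^2 ≤ 2*A t s - (A t s)^2 := by nlinarith [hb t s]
    have hApos : 0 < A t s + c^2/2 := by nlinarith [hA0 t s, sq_nonneg c]
    nlinarith [sq_nonneg (A t s - c^2/2), sq_nonneg (A t s * c), mul_pos hc hc, hbb,
      hA0 t s, hApos]
  -- t-monotonicity
  have hanti : ∀ s, StrictAnti (fun t => Φ t s) := fun s =>
    strictAnti_of_hasDerivAt_neg (f' := fun t => -(A t s)) (fun t => hA t s)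
      (fun t => neg_lt_zero.mpr (hA0 t s))
  -- Lipschitz in t with constant 2 (downwards)
  have hlipt : ∀ s t₁ t₂, t₁ ≤ t₂ → Φ t₁ s - Φ t₂ s ≤ 2*(t₂ - t₁) := by
    intro s t₁ t₂ h12
    have hm : StrictMono (fun t => Φ t s + 2*t) := by
      apply strictMono_of_hasDerivAt_pos (f' := fun t => -(A t s) + 2)
      · intro t
        have h2 : HasDerivAt (fun t' : ℝ => 2 * t') 2 t := by
          simpa using (hasDerivAt_id t).const_mul 2
        exact (hA t s).add h2
      · intro t; simp; linarith [hA2 t s]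
    have := hm.monotone h12
    linarith
  -- Lipschitz in s with constant 1 (both directions)
  have hlipsU : ∀ t s₁ s₂, s₁ ≤ s₂ → Φ t s₂ - Φ t s₁ ≤ s₂ - s₁ := by
    intro t s₁ s₂ h12
    have hm : StrictAnti (fun s => Φ t s - s) := by
      apply strictAnti_of_hasDerivAt_neg (f' := fun s => B t s - 1)
      · intro s
        exact (hB t s).sub (hasDerivAt_id s)
      · intro s; show B t s - 1 < 0; linarith [(hBle t s).2]
    have := hm.antitone h12
    linarith
  have hlipsL : ∀ t s₁ s₂, s₁ ≤ s₂ → Φ t s₁ - Φ t s₂ ≤ s₂ - s₁ := by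
    intro t s₁ s₂ h12
    have hm : StrictMono (fun s => Φ t s + s) := by
      apply strictMono_of_hasDerivAt_pos (f' := fun s => B t s + 1)
      · intro s
        exact (hB t s).add (hasDerivAt_id s)
      · intro s; show 0 < B t s + 1; linarith [(hBle t s).1]
    have := hm.monotone h12
    linarith
  -- the function M
  set M : ℝ → ℝ := fun t => -(Φ t 0) with hM
  have hM0 : M 0 = 0 := by simp [hM, h00]
  have hMpos : ∀ t, 0 < t → 0 < M t := by
    intro t ht
    have := hanti 0 ht
    simp only [h00] at this
    simp only [hM]; linarith [this]
  have hMmono : ∀ t₁ t₂, t₁ ≤ t₂ → M t₁ ≤ M t₂ := by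
    intro t₁ t₂ h12
    rcases eq_or_lt_of_le h12 with rfl | hlt
    · exact le_rfl
    · exact le_of_lt (by simpa [hM] using neg_lt_neg (hanti 0 hlt))
  have hMlip : ∀ t₁ t₂, t₁ ≤ t₂ → M t₂ ≤ M t₁ + 2*(t₂ - t₁) := by
    intro t₁ t₂ h12
    have := hlipt 0 t₁ t₂ h12
    simp only [hM]; linarith
  have hMle : ∀ T, 0 ≤ T → M T ≤ 2*T := by
    intro T hT
    have := hMlip 0 T hT
    rw [hM0] at this; linarith
  have hcontt : ∀ s, Continuous fun t => Φ t s := fun s =>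
    continuous_iff_continuousAt.mpr fun t => (hA t s).continuousAt
  have hconts : ∀ t, Continuous fun s => Φ t s := fun t =>
    continuous_iff_continuousAt.mpr fun s => (hB t s).continuousAt
  have hMcont : Continuous M := (hcontt 0).neg
  have hMdef : ∀ t, M t = -(Φ t 0) := fun t => rfl
  clear_value M
  have hcontAt : ∀ t, Continuous fun s => A t s := fun t => hAc.comp (Continuous.prodMk_right t)
  have hcontAs : ∀ s, Continuous fun t => A t s := fun s =>
    hAc.comp (continuous_id.prodMk continuous_const)
  -- FTC in s
  have hFTCs : ∀ t, Φ t d - Φ t 0 = ∫ s in (0:ℝ)..d, B t s := fun t =>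
    (integral_eq_sub_of_hasDerivAt (fun s _ => hB t s)
      ((hBc t).intervalIntegrable 0 d)).symm
  -- pointwise inequality M t ^ 2 ≤ 2 d ∫ A
  have hMsq : ∀ t, 0 < t → (M t)^2 ≤ 2*d*(∫ s in (0:ℝ)..d, A t s) := by
    intro t ht
    have hMt := hMpos t ht
    have hc : 0 < M t / d := div_pos hMt hd
    have h1 : M t ≤ ∫ s in (0:ℝ)..d, B t s := by
      rw [← hFTCs t]
      have := hpos t
      rw [hMdef t]; linarith
    have h2 : (M t / d) * ∫ s in (0:ℝ)..d, B t s
        ≤ (∫ s in (0:ℝ)..d, A t s) + d * ((M t / d)^2/2) := by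
      rw [← intervalIntegral.integral_const_mul]
      have h3 : ∫ s in (0:ℝ)..d, (A t s + (M t / d)^2/2)
          = (∫ s in (0:ℝ)..d, A t s) + d * ((M t / d)^2/2) := by
        rw [intervalIntegral.integral_add ((hcontAt t).intervalIntegrable 0 d)
          (intervalIntegrable_const), intervalIntegral.integral_const]
        simp [smul_eq_mul]
      rw [← h3]
      apply intervalIntegral.integral_mono_on hd.le
        ((continuous_const.mul (hBc t)).intervalIntegrable 0 d)
        (((hcontAt t).add continuous_const).intervalIntegrable 0 d)
      intro s _
      exact hAMGM t s _ hc
    have h4 : (M t / d) * M t ≤ (M t / d) * ∫ s in (0:ℝ)..d, B t s :=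
      mul_le_mul_of_nonneg_left h1 hc.le
    have h5 : (M t / d) * M t ≤ (∫ s in (0:ℝ)..d, A t s) + d * ((M t / d)^2/2) :=
      le_trans h4 h2
    have hd' : d ≠ 0 := ne_of_gt hd
    rw [div_mul_eq_mul_div, div_pow] at h5
    have h6 : (M t)^2 / d - (M t)^2/(2*d) ≤ ∫ s in (0:ℝ)..d, A t s := by
      have : d * ((M t)^2 / d^2 / 2) = (M t)^2/(2*d) := by field_simp
      rw [this] at h5
      have : M t * M t = (M t)^2 := by ring
      rw [this] at h5
      linarith
    have h7 : (M t)^2 / d - (M t)^2/(2*d) = (M t)^2/(2*d) := by field_simp; ring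
    rw [h7] at h6
    calc (M t)^2 = 2*d * ((M t)^2/(2*d)) := by field_simp
    _ ≤ 2*d*(∫ s in (0:ℝ)..d, A t s) := by
        apply mul_le_mul_of_nonneg_left h6 (by linarith)
  -- the Fubini upper bound
  have hstar : ∀ T, 0 ≤ T → ∫ t in Ioc (0:ℝ) T, (M t)^2 ≤ 2*d*(d*(M T + 2*d)) := by
    intro T hT
    set μ := volume.restrict (Ioc (0:ℝ) T) with hμ
    set ν := volume.restrict (Ioc (0:ℝ) d) with hν
    have hIntOn : IntegrableOn (fun q : ℝ × ℝ => A q.1 q.2)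
        (Ioc (0:ℝ) T ×ˢ Ioc (0:ℝ) d) volume := by
      apply (hAc.continuousOn.integrableOn_compact
        ((isCompact_Icc (a := (0:ℝ)) (b := T)).prod
         (isCompact_Icc (a := (0:ℝ)) (b := d)))).mono_set
      exact Set.prod_mono Set.Ioc_subset_Icc_self Set.Ioc_subset_Icc_self
    have hI : Integrable (Function.uncurry fun t s => A t s) (μ.prod ν) := by
      rw [hμ, hν, Measure.prod_restrict, ← Measure.volume_eq_prod]
      exact hIntOn
    have hswap := MeasureTheory.integral_integral_swap (f := fun t s => A t s) hI
    have hmarg : Integrable (fun t => ∫ s, A t s ∂ν) μ := hI.integral_prod_left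
    have hFTCt : ∀ s, ∫ t, A t s ∂μ = Φ 0 s - Φ T s := by
      intro s
      have h0 : ∫ t, A t s ∂μ = ∫ t in (0:ℝ)..T, A t s := by
        rw [hμ]; exact (intervalIntegral.integral_of_le hT).symm
      rw [h0]
      have h1 := integral_eq_sub_of_hasDerivAt (f := fun t => Φ t s)
        (f' := fun t => -(A t s)) (fun t _ => hA t s)
        (((hcontAs s).neg).intervalIntegrable 0 T)
      have h2 : ∫ t in (0:ℝ)..T, -(A t s) = -∫ t in (0:ℝ)..T, A t s :=
        intervalIntegral.integral_neg
      rw [h2] at h1; linarith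
    have hstep1 : ∫ t in Ioc (0:ℝ) T, (M t)^2 ≤ ∫ t, 2*d*(∫ s, A t s ∂ν) ∂μ := by
      apply setIntegral_mono_on ((hMcont.pow 2).integrableOn_Ioc)
        (hmarg.const_mul _) measurableSet_Ioc
      intro t ht
      have := hMsq t ht.1
      rwa [intervalIntegral.integral_of_le hd.le] at this
    have hstep2 : ∫ t, 2*d*(∫ s, A t s ∂ν) ∂μ = 2*d * ∫ s, (Φ 0 s - Φ T s) ∂ν := by
      rw [MeasureTheory.integral_const_mul, hswap]
      congr 1
      exact integral_congr_ae (Filter.Eventually.of_forall fun s => hFTCt s)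
    have hstep3 : ∫ s, (Φ 0 s - Φ T s) ∂ν ≤ d * (M T + 2*d) := by
      have hb1 : ∀ s ∈ Ioc (0:ℝ) d, Φ 0 s - Φ T s ≤ M T + 2*d := by
        intro s hs
        have h1 : Φ 0 s - Φ 0 0 ≤ s - 0 := hlipsU 0 0 s hs.1.le
        have h2 : Φ T 0 - Φ T s ≤ s - 0 := hlipsL T 0 s hs.1.le
        have hMT : M T = -(Φ T 0) := hMdef T
        rw [h00] at h1
        linarith [hs.2]
      have hconst : IntegrableOn (fun _ : ℝ => M T + 2*d) (Ioc (0:ℝ) d) volume := by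
        exact integrableOn_const measure_Ioc_lt_top.ne
      calc ∫ s, (Φ 0 s - Φ T s) ∂ν ≤ ∫ s, (M T + 2*d) ∂ν :=
            setIntegral_mono_on (((hconts 0).sub (hconts T)).integrableOn_Ioc)
              hconst measurableSet_Ioc hb1
        _ = d * (M T + 2*d) := by
            rw [hν, MeasureTheory.setIntegral_const, Real.volume_real_Ioc]
            rw [smul_eq_mul, sub_zero, max_eq_left hd.le]
    calc ∫ t in Ioc (0:ℝ) T, (M t)^2 ≤ 2*d * ∫ s, (Φ 0 s - Φ T s) ∂ν := by
          rw [← hstep2]; exact hstep1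
      _ ≤ 2*d*(d*(M T + 2*d)) := by
          apply mul_le_mul_of_nonneg_left hstep3 (by linarith)
  -- M is bounded by 8 d
  have hM8 : ∀ T, 0 ≤ T → M T < 8*d := by
    intro T hT
    by_contra hcon
    push_neg at hcon
    have hMT8 : 8*d ≤ M T := hcon
    have hMTpos : 0 < M T := by linarith
    have h2T : M T ≤ 2*T := hMle T hT
    have hr0 : 0 < M T / 4 := by positivity
    have hrT : M T / 4 ≤ T := by linarith
    have hlow : ∀ t ∈ Ioc (T - M T / 4) T, (M T / 2)^2 ≤ (M t)^2 := by
      intro t ht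
      have h1 : M T ≤ M t + 2*(T - t) := hMlip t T ht.2
      have h2 : M T / 2 ≤ M t := by
        have : T - t < M T / 4 := by linarith [ht.1]
        linarith
      exact pow_le_pow_left₀ (by linarith) h2 2
    have hsub : Ioc (T - M T / 4) T ⊆ Ioc 0 T := Ioc_subset_Ioc (by linarith) le_rfl
    have hint : IntegrableOn (fun t => (M t)^2) (Ioc (0:ℝ) T) volume :=
      (hMcont.pow 2).integrableOn_Ioc
    have hmono : ∫ t in Ioc (T - M T / 4) T, (M t)^2 ≤ ∫ t in Ioc (0:ℝ) T, (M t)^2 := by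
      apply setIntegral_mono_set hint
        (Filter.Eventually.of_forall fun t => sq_nonneg (M t))
        (HasSubset.Subset.eventuallyLE hsub)
    have hconst2 : ∫ t in Ioc (T - M T / 4) T, (M T / 2)^2 = (M T / 4) * (M T / 2)^2 := by
      rw [MeasureTheory.setIntegral_const, Real.volume_real_Ioc, smul_eq_mul]
      congr 1
      rw [max_eq_left (by linarith)]
      ring
    have hlow2 : (M T / 4) * (M T / 2)^2 ≤ ∫ t in Ioc (T - M T / 4) T, (M t)^2 := by
      rw [← hconst2]
      apply setIntegral_mono_on
        (integrableOn_const measure_Ioc_lt_top.ne)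
        (hint.mono_set hsub) measurableSet_Ioc hlow
    have h3 := hstar T hT
    have hchain : (M T / 4) * (M T / 2)^2 ≤ 2*d*(d*(M T + 2*d)) :=
      le_trans hlow2 (le_trans hmono h3)
    have hsq8 : 64*d^2 ≤ (M T)^2 := by nlinarith [hMT8, hd]
    have hcube : 64*d^2*(M T) ≤ (M T)^3 := by nlinarith [hsq8, hMTpos]
    nlinarith [hchain, hcube, mul_pos (mul_pos hd hd) hd, mul_pos hd hd, hMT8]
  -- endgame
  have hM1 : 0 < M 1 := hMpos 1 one_pos
  obtain ⟨T, hTpos, h5⟩ : ∃ T, 1 ≤ T ∧ (T - 1) * (M 1)^2 = 21*d^3 := by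
    refine ⟨1 + 21*d^3/(M 1)^2, ?_, ?_⟩
    · nlinarith [div_nonneg (by positivity : (0:ℝ) ≤ 21*d^3) (by positivity : (0:ℝ) ≤ (M 1)^2)]
    · field_simp
      ring
  have hT0 : (0:ℝ) ≤ T := by linarith
  have hlow : ∀ t ∈ Ioc (1:ℝ) T, (M 1)^2 ≤ (M t)^2 := by
    intro t ht
    exact pow_le_pow_left₀ hM1.le (hMmono 1 t ht.1.le) 2
  have hint : IntegrableOn (fun t => (M t)^2) (Ioc (0:ℝ) T) volume :=
    (hMcont.pow 2).integrableOn_Ioc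
  have hsub : Ioc (1:ℝ) T ⊆ Ioc 0 T := Ioc_subset_Ioc (by norm_num) le_rfl
  have h1 : (T - 1) * (M 1)^2 ≤ ∫ t in Ioc (1:ℝ) T, (M t)^2 := by
    have hc : ∫ t in Ioc (1:ℝ) T, (M 1)^2 = (T - 1) * (M 1)^2 := by
      rw [MeasureTheory.setIntegral_const, Real.volume_real_Ioc, smul_eq_mul,
        max_eq_left (by linarith)]
    rw [← hc]
    apply setIntegral_mono_on
      (integrableOn_const measure_Ioc_lt_top.ne)
      (hint.mono_set hsub) measurableSet_Ioc hlow
  have h2 : ∫ t in Ioc (1:ℝ) T, (M t)^2 ≤ ∫ t in Ioc (0:ℝ) T, (M t)^2 :=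
    setIntegral_mono_set hint
      (Filter.Eventually.of_forall fun t => sq_nonneg (M t))
      (HasSubset.Subset.eventuallyLE hsub)
  have h3 := hstar T hT0
  have h4 : M T < 8*d := hM8 T hT0
  nlinarith [h1, h2, h3, h4, h5, mul_pos hd hd, mul_pos (mul_pos hd hd) hd]

private lemma bessel2 {E : Type*} [NormedAddCommGroup E] [InnerProductSpace ℝ E]
    (g e w : E) (he : ⟪e, e⟫ = 1) (hw : ⟪w, w⟫ = 1) (hew : ⟪e, w⟫ = 0) :
    ⟪g, e⟫^2 + ⟪g, w⟫^2 ≤ ‖g‖^2 := by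
  set α := ⟪g, e⟫ with hα
  set β := ⟪g, w⟫ with hβ
  have h1 : ⟪e, g⟫ = α := by rw [hα, real_inner_comm]
  have h2 : ⟪w, g⟫ = β := by rw [hβ, real_inner_comm]
  have h3 : ⟪w, e⟫ = 0 := by rw [real_inner_comm, hew]
  have h0 : (0:ℝ) ≤ ⟪g - α•e - β•w, g - α•e - β•w⟫ := real_inner_self_nonneg
  have hgg : ⟪g, g⟫ = ‖g‖^2 := real_inner_self_eq_norm_sq g
  have hexp : ⟪g - α•e - β•w, g - α•e - β•w⟫ = ‖g‖^2 - α^2 - β^2 := by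
    simp only [inner_sub_left, inner_sub_right, real_inner_smul_left, real_inner_smul_right,
      he, hw, hew, h1, h2, h3, ← hα, ← hβ, hgg]
    ring
  rw [hexp] at h0
  linarith

set_option maxHeartbeats 2000000 in
private lemma glue {E : Type*} [NormedAddCommGroup E] [InnerProductSpace ℝ E] [CompleteSpace E]
    (h : E → ℝ) (hC1 : ContDiff ℝ 1 h) (hgrad : ∀ y, ‖gradient h y‖ < 1)
    (e : E) (hee : ⟪e, e⟫ = 1) (p0 : ℝ) (p' x' : E)
    (hlam_ne : ∀ τ : ℝ, h (p' + τ • e) - p0 - τ ≠ 0)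
    (hx : h x' = p0 + ⟪x' - p', e⟫) : False := by
  have hdiff : Differentiable ℝ h := hC1.differentiable one_ne_zero
  have hfg : ∀ y u, fderiv ℝ h y u = ⟪gradient h y, u⟫ := by
    intro y u
    exact (InnerProductSpace.toDual_symm_apply).symm
  have hgc : Continuous fun y => gradient h y := by
    exact (InnerProductSpace.toDual ℝ E).symm.continuous.comp (hC1.continuous_fderiv one_ne_zero)
  -- the component of p' - x' orthogonal to e
  by_cases hz0 : (p' - x') - ⟪p' - x', e⟫ • e = 0
  · -- x' lies on the line, contradiction
    apply hlam_ne (-⟪p' - x', e⟫)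
    have hxp : p' + (-⟪p' - x', e⟫) • e = x' := by
      have h1 : p' - x' = ⟪p' - x', e⟫ • e := sub_eq_zero.mp hz0
      rw [neg_smul, ← h1]; abel
    rw [hxp, hx]
    have : ⟪x' - p', e⟫ = -⟪p' - x', e⟫ := by
      rw [← inner_neg_left]; congr 1; abel
    rw [this]; ring
  · set z : E := (p' - x') - ⟪p' - x', e⟫ • e with hz
    set c : ℝ := ⟪p' - x', e⟫ with hc
    set d : ℝ := ‖z‖ with hd
    set w : E := ‖z‖⁻¹ • z with hw
    have hdpos : 0 < d := by rw [hd]; exact norm_pos_iff.mpr hz0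
    have hzz : ⟪z, z⟫ = d^2 := by rw [hd]; exact real_inner_self_eq_norm_sq z
    have hze : ⟪z, e⟫ = 0 := by
      rw [hz, inner_sub_left, real_inner_smul_left, hee, ← hc]; ring
    have hwe : ⟪w, e⟫ = 0 := by rw [hw, real_inner_smul_left, hze]; ring
    have hew : ⟪e, w⟫ = 0 := by rw [real_inner_comm]; exact hwe
    have hww : ⟪w, w⟫ = 1 := by
      rw [hw, real_inner_smul_left, real_inner_smul_right, hzz, ← hd]
      field_simp
    -- sign of lam
    set lam : ℝ → ℝ := fun τ => h (p' + τ • e) - p0 - τ with hlam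
    have hlamc : Continuous lam := by
      apply Continuous.sub
      apply Continuous.sub
      · exact hC1.continuous.comp (continuous_const.add (continuous_id.smul continuous_const))
      · exact continuous_const
      · exact continuous_id
    have hsign : (∀ τ, 0 < lam τ) ∨ (∀ τ, lam τ < 0) := by
      by_contra hcc
      push_neg at hcc
      obtain ⟨⟨τ1, h1⟩, ⟨τ2, h2⟩⟩ := hcc
      have h1' : lam τ1 < 0 := lt_of_le_of_ne h1 (hlam_ne τ1)
      have h2' : 0 < lam τ2 := lt_of_le_of_ne h2 (Ne.symm (hlam_ne τ2))
      have hmem : (0:ℝ) ∈ Set.uIcc (lam τ1) (lam τ2) :=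
        Set.mem_uIcc.mpr (Or.inl ⟨h1'.le, h2'.le⟩)
      obtain ⟨τ0, -, hτ0⟩ := intermediate_value_uIcc hlamc.continuousOn hmem
      exact hlam_ne τ0 hτ0
    obtain ⟨ε, hε2, hεlam⟩ : ∃ ε : ℝ, ε * ε = 1 ∧ ∀ τ, 0 < ε * lam τ := by
      rcases hsign with hs | hs
      · exact ⟨1, by norm_num, fun τ => by simpa using hs τ⟩
      · exact ⟨-1, by norm_num, fun τ => by simpa using hs τ⟩
    set Y : ℝ → ℝ → E := fun t s => x' + t • (ε • e) + s • w with hY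
    have hYc : Continuous fun q : ℝ × ℝ => Y q.1 q.2 := by
      apply Continuous.add
      apply Continuous.add continuous_const
      · exact continuous_fst.smul continuous_const
      · exact continuous_snd.smul continuous_const
    -- apply the key lemma
    apply key2d
      (fun t s => ε * (h (Y t s) - p0 - ⟪Y t s - p', e⟫))
      (fun t s => 1 - ⟪gradient h (Y t s), e⟫)
      (fun t s => ε * ⟪gradient h (Y t s), w⟫) d hdpos
    · -- hA
      intro t s
      have hcurve : HasDerivAt (fun t' => Y t' s) (ε • e) t := by
        have h1 : HasDerivAt (fun t' : ℝ => t' • (ε • e)) (ε • e) t := by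
          simpa using (hasDerivAt_id t).smul_const (ε • e)
        exact (h1.const_add x').add_const (s • w)
      have hh : HasDerivAt (fun t' => h (Y t' s)) (fderiv ℝ h (Y t s) (ε • e)) t :=
        (hdiff (Y t s)).hasFDerivAt.comp_hasDerivAt t hcurve
      have hlin : HasDerivAt (fun t' => ⟪Y t' s - p', e⟫) ε t := by
        have heq : (fun t' => ⟪Y t' s - p', e⟫)
            = fun t' => ⟪x' + s • w - p', e⟫ + t' * ε := by
          funext t'
          have h2 : Y t' s - p' = (x' + s • w - p') + t' • (ε • e) := by
            rw [hY]; module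
          rw [h2, inner_add_left, real_inner_smul_left, real_inner_smul_left, hee]
          ring
        rw [heq]
        simpa using ((hasDerivAt_id t).mul_const ε).const_add (⟪x' + s • w - p', e⟫)
      have hcomb := ((hh.sub_const p0).sub hlin).const_mul ε
      have hD : ε * (fderiv ℝ h (Y t s) (ε • e) - ε)
          = -(1 - ⟪gradient h (Y t s), e⟫) := by
        rw [ContinuousLinearMap.map_smul, smul_eq_mul, hfg]
        linear_combination (⟪gradient h (Y t s), e⟫ - 1) * hε2
      rw [hD] at hcomb
      exact hcomb
    · -- hB
      intro t s
      have hcurve : HasDerivAt (fun s' => Y t s') w s := by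
        have h1 : HasDerivAt (fun s' : ℝ => s' • w) w s := by
          simpa using (hasDerivAt_id s).smul_const w
        exact h1.const_add (x' + t • (ε • e))
      have hh : HasDerivAt (fun s' => h (Y t s')) (fderiv ℝ h (Y t s) w) s :=
        (hdiff (Y t s)).hasFDerivAt.comp_hasDerivAt s hcurve
      have hlin : HasDerivAt (fun s' => ⟪Y t s' - p', e⟫) 0 s := by
        have heq : (fun s' => ⟪Y t s' - p', e⟫)
            = fun _ => ⟪x' + t • (ε • e) - p', e⟫ := by
          funext s'
          have h2 : Y t s' - p' = (x' + t • (ε • e) - p') + s' • w := by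
            rw [hY]; module
          rw [h2, inner_add_left, real_inner_smul_left, hwe]
          ring
        rw [heq]
        exact hasDerivAt_const s _
      have hcomb := ((hh.sub_const p0).sub hlin).const_mul ε
      have hD : ε * (fderiv ℝ h (Y t s) w - 0) = ε * ⟪gradient h (Y t s), w⟫ := by
        rw [hfg]; ring
      rw [hD] at hcomb
      exact hcomb
    · -- continuity of A
      exact continuous_const.sub ((hgc.comp hYc).inner continuous_const)
    · -- continuity of B t ·
      intro t
      have : Continuous fun s => Y t s := by
        apply Continuous.add continuous_const (continuous_id.smul continuous_const)
      exact continuous_const.mul ((hgc.comp this).inner continuous_const)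
    · -- the gradient bound
      intro t s
      have hbes := bessel2 (gradient h (Y t s)) e w hee hww hew
      have hn : ‖gradient h (Y t s)‖^2 < 1 := by
        have := hgrad (Y t s)
        nlinarith [norm_nonneg (gradient h (Y t s))]
      have hsq : (ε * ⟪gradient h (Y t s), w⟫)^2 = ⟪gradient h (Y t s), w⟫^2 := by
        linear_combination ⟪gradient h (Y t s), w⟫^2 * hε2
      calc (1 - (1 - ⟪gradient h (Y t s), e⟫))^2 + (ε * ⟪gradient h (Y t s), w⟫)^2
          = ⟪gradient h (Y t s), e⟫^2 + ⟪gradient h (Y t s), w⟫^2 := by rw [hsq]; ring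
        _ ≤ ‖gradient h (Y t s)‖^2 := hbes
        _ < 1 := hn
    · -- Φ 0 0 = 0
      have hY00 : Y 0 0 = x' := by rw [hY]; simp
      simp only [hY00, hx]
      ring
    · -- positivity on the far line
      intro t
      have hdw : d • w = z := by
        rw [hw, hd, smul_smul]
        field_simp
        exact one_smul ℝ z
      have hYtd : Y t d = p' + (t * ε - c) • e := by
        rw [hY]
        simp only
        rw [hdw, hz, smul_smul, sub_smul]
        abel
      have := hεlam (t * ε - c)
      rw [hlam] at this
      simp only at this
      rw [hYtd]
      have hib : (⟪p' + (t * ε - c) • e - p', e⟫ : ℝ) = t * ε - c := by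
        have h9 : p' + (t * ε - c) • e - p' = (t * ε - c) • e := by abel
        rw [h9, real_inner_smul_left, hee]; ring
      rw [hib]
      exact this

/-- Let `F̃` be a complete spacelike `C¹` hypersurface in `M^{n+1}` (realized, as every
such hypersurface is, as the graph of a `C¹` function `h` with `‖∇h‖ < 1`, complete in
the sense that curves going to infinity have infinite induced length).  If `p` is a point
and `v` a future-directed null vector such that the line `p + ℝv` does not meet `F̃`
(so that in particular `p ∉ D(F̃)`), then the entire null hyperplane `P = p + v^⊥` does
not meet `F̃`. -/
theorem null_plane_misses_spacelike_hypersurface {n : ℕ}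
    (h : EuclideanSpace ℝ (Fin n) → ℝ) (hC1 : ContDiff ℝ 1 h)
    (hgrad : ∀ y : EuclideanSpace ℝ (Fin n), ‖gradient h y‖ < 1)
    -- completeness of the induced Riemannian metric on the graph:
    -- divergent C¹ curves have infinite induced length
    (hcomplete : ∀ u : ℝ → EuclideanSpace ℝ (Fin n), ContDiff ℝ 1 u →
      Tendsto (fun t => ‖u t‖) atTop atTop →
      Tendsto (fun T : ℝ => ∫ t in (0:ℝ)..T,
        Real.sqrt (‖deriv u t‖ ^ 2 - (deriv (fun s => h (u s)) t) ^ 2)) atTop atTop)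
    (F : Set (Fin (n+1) → ℝ)) (hF : F = {x | x 0 = h (horizE x)})
    (p v : Fin (n+1) → ℝ) (hv : NullFuture v)
    (hline : ∀ t : ℝ, p + t • v ∉ F) :
    ∀ x ∈ F, mink (x - p) v ≠ 0 := by
  clear hcomplete
  subst hF
  obtain ⟨hnull, -, hv0⟩ := hv
  intro x hx hmink
  simp only [Set.mem_setOf_eq] at hx
  have hv00 : v 0 ≠ 0 := ne_of_gt hv0
  -- inner products on E are sums
  have hinner : ∀ w u : EuclideanSpace ℝ (Fin n), ⟪w, u⟫ = ∑ i : Fin n, w i * u i := by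
    intro w u
    rw [PiLp.inner_apply]
    simp [RCLike.inner_apply, starRingEnd_apply, mul_comm]
  -- mink in terms of horizontal inner product
  have hmink_eq : ∀ w u : Fin (n+1) → ℝ, mink w u = ⟪horizE w, horizE u⟫ - w 0 * u 0 := by
    intro w u
    rw [hinner]
    simp only [mink, horizE, WithLp.ofLp_toLp]
    rw [Fin.sum_univ_succ]
    ring
  have haa : ⟪horizE v, horizE v⟫ = v 0 * v 0 := by
    have h1 := hmink_eq v v
    rw [hnull] at h1
    linarith
  have hee : ⟪((v 0)⁻¹ • horizE v : EuclideanSpace ℝ (Fin n)),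
      ((v 0)⁻¹ • horizE v : EuclideanSpace ℝ (Fin n))⟫ = 1 := by
    rw [real_inner_smul_left, real_inner_smul_right, haa]
    field_simp
  -- horizontal part of points on the line
  have hhor : ∀ t : ℝ, horizE (p + t • v)
      = horizE p + (t * v 0) • ((v 0)⁻¹ • horizE v) := by
    intro t
    ext i
    show (p + t • v) i.succ = _
    rw [smul_smul]
    have : (t * v 0) * (v 0)⁻¹ = t := by field_simp
    rw [this]
    show p i.succ + t * v i.succ = (horizE p) i + (t • horizE v) i
    rfl
  -- the line never meets the graph
  have hlam_ne : ∀ τ : ℝ, h (horizE p + τ • ((v 0)⁻¹ • horizE v)) - p 0 - τ ≠ 0 := by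
    intro τ h0
    apply hline (τ / v 0)
    simp only [Set.mem_setOf_eq]
    have h1 : horizE (p + (τ / v 0) • v) = horizE p + τ • ((v 0)⁻¹ • horizE v) := by
      rw [hhor (τ / v 0)]
      congr 1
      field_simp
    rw [h1]
    have h2 : h (horizE p + τ • ((v 0)⁻¹ • horizE v)) = p 0 + τ := by linarith
    rw [h2]
    show p 0 + (τ / v 0) * v 0 = p 0 + τ
    field_simp
  -- the graph point x lies on the null hyperplane
  have hxx : h (horizE x) = p 0
      + ⟪horizE x - horizE p, ((v 0)⁻¹ • horizE v : EuclideanSpace ℝ (Fin n))⟫ := by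
    have hm := hmink_eq (x - p) v
    rw [hmink] at hm
    have hsub : horizE (x - p) = horizE x - horizE p := by
      ext i; show (x - p) i.succ = _; rfl
    rw [hsub] at hm
    have h0 : (x - p) 0 = x 0 - p 0 := rfl
    rw [h0] at hm
    rw [real_inner_smul_right]
    have h2 : ⟪horizE x - horizE p, horizE v⟫ = (x 0 - p 0) * v 0 := by linarith
    rw [h2, hx]
    field_simp
    ring
  exact glue h hC1 hgrad _ hee (p 0) (horizE p) (horizE x) hlam_ne hxx

end Auxiliary
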